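/- Let 𝓡_1 = b_1^2 + b_2^2 − b_1 b_2 − q_1 − q_2 and 𝓡_2 = b_1 b_2^2 − b_1^2 b_2 + q_1 b_2 − q_2 b_1 in ℂ[b_1, b_2, q_1, q_2]. Then the quotient ring A = ℂ[b_1, b_2, q_1, q_2]/(𝓡_1, 𝓡_2) is a free module over ℂ[q_1, q_2] of rank 6, with basis the classes of the monomials 1, b_2, b_1, b_2^2, b_2 b_1, b_2^2 b_1. -/

import Mathlib

open MvPolynomial

noncomputable section

set_option maxHeartbeats 1000000
set_option synthInstance.maxHeartbeats 1000000

/-- The polynomial ring `ℂ[b₁, b₂, q₁, q₂]`, with `b₁ = X 0`, `b₂ = X 1`,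
`q₁ = X 2`, `q₂ = X 3`. -/
abbrev R4 : Type := MvPolynomial (Fin 4) ℂ

/-- `𝓡₁ = b₁² + b₂² - b₁b₂ - q₁ - q₂`. -/
def Rel1 : R4 := X 0 ^ 2 + X 1 ^ 2 - X 0 * X 1 - X 2 - X 3

/-- `𝓡₂ = b₁b₂² - b₁²b₂ + q₁b₂ - q₂b₁`. -/
def Rel2 : R4 := X 0 * X 1 ^ 2 - X 0 ^ 2 * X 1 + X 2 * X 1 - X 3 * X 0

/-- The quantum cohomology ring `A = ℂ[b₁, b₂, q₁, q₂]/(𝓡₁, 𝓡₂)` of the full flag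
manifold of `GL₃(ℂ)`. -/
abbrev QH3 : Type := R4 ⧸ Ideal.span {Rel1, Rel2}

/-- The quotient map `ℂ[b₁, b₂, q₁, q₂] → A`. -/
def mk3 : R4 →+* QH3 := Ideal.Quotient.mk _

/-- The coefficient ring `ℂ[q₁, q₂]` (with `q₁ = X 0`, `q₂ = X 1`). -/
abbrev S2 : Type := MvPolynomial (Fin 2) ℂ

/-- The natural map `ℂ[q₁, q₂] → A`, sending `q₁, q₂` to the classes of `q₁, q₂`. -/
def structMap : S2 →+* QH3 :=
  MvPolynomial.eval₂Hom (mk3.comp MvPolynomial.C) ![mk3 (X 2), mk3 (X 3)]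

/-- `A` is a `ℂ[q₁, q₂]`-module via the natural map `ℂ[q₁, q₂] → A`. -/
instance : Module S2 QH3 := Module.compHom _ structMap

/-- The classes of the monomials `1, b₂, b₁, b₂², b₂b₁, b₂²b₁` in `A`. -/
def monBasis : Fin 6 → QH3 :=
  ![mk3 1, mk3 (X 1), mk3 (X 0), mk3 (X 1 ^ 2), mk3 (X 1 * X 0), mk3 (X 1 ^ 2 * X 0)]

/-! ### Auxiliary material for the proof -/

namespace QH3Aux

/-- The free `ℂ[q₁,q₂]`-module of rank 6 which will be shown isomorphic to `QH3`. -/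
abbrev M6 : Type := Fin 6 → S2

abbrev E6 := Module.End S2 M6

section Vec6
variable {α : Type*} (a0 a1 a2 a3 a4 a5 : α)
@[simp] lemma vec6_0 : ![a0,a1,a2,a3,a4,a5] 0 = a0 := rfl
@[simp] lemma vec6_1 : ![a0,a1,a2,a3,a4,a5] 1 = a1 := rfl
@[simp] lemma vec6_2 : ![a0,a1,a2,a3,a4,a5] 2 = a2 := rfl
@[simp] lemma vec6_3 : ![a0,a1,a2,a3,a4,a5] 3 = a3 := rfl
@[simp] lemma vec6_4 : ![a0,a1,a2,a3,a4,a5] 4 = a4 := rfl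
@[simp] lemma vec6_5 : ![a0,a1,a2,a3,a4,a5] 5 = a5 := rfl
@[simp] lemma finsucc_3_0 : Fin.succ (0 : Fin 3) = (1 : Fin 4) := rfl
@[simp] lemma finsucc_3_1 : Fin.succ (1 : Fin 3) = (2 : Fin 4) := rfl
@[simp] lemma finsucc_3_2 : Fin.succ (2 : Fin 3) = (3 : Fin 4) := rfl
@[simp] lemma finsucc_4_0 : Fin.succ (0 : Fin 4) = (1 : Fin 5) := rfl
@[simp] lemma finsucc_4_1 : Fin.succ (1 : Fin 4) = (2 : Fin 5) := rfl
@[simp] lemma finsucc_4_2 : Fin.succ (2 : Fin 4) = (3 : Fin 5) := rfl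
@[simp] lemma finsucc_4_3 : Fin.succ (3 : Fin 4) = (4 : Fin 5) := rfl
@[simp] lemma finsucc_5_0 : Fin.succ (0 : Fin 5) = (1 : Fin 6) := rfl
@[simp] lemma finsucc_5_1 : Fin.succ (1 : Fin 5) = (2 : Fin 6) := rfl
@[simp] lemma finsucc_5_2 : Fin.succ (2 : Fin 5) = (3 : Fin 6) := rfl
@[simp] lemma finsucc_5_3 : Fin.succ (3 : Fin 5) = (4 : Fin 6) := rfl
@[simp] lemma finsucc_5_4 : Fin.succ (4 : Fin 5) = (5 : Fin 6) := rfl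
end Vec6

local notation "q1" => (X 0 : S2)
local notation "q2" => (X 1 : S2)

/-- Multiplication by `b₁` in the monomial basis. -/
def L1 : M6 →ₗ[S2] M6 where
  toFun c := ![(q1+q2) * c 2 + (q1*q2+q2^2) * c 5, q1 * c 4, c 0 - q2 * c 4,
    -c 2 + (q1-q2) * c 5, c 1 + c 2 + q2 * c 5, c 3 + c 4]
  map_add' c d := by
    funext i; fin_cases i <;> simp <;> ring
  map_smul' s c := by
    funext i; fin_cases i <;> simp [smul_eq_mul] <;> ring

/-- Multiplication by `b₂` in the monomial basis. -/
def L2 : M6 →ₗ[S2] M6 where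
  toFun c := ![(q1*q2+q2^2) * c 5, c 0 + q2 * c 3, q2 * c 3, c 1 - q2 * c 5,
    c 2 + 2*q2 * c 5, c 4]
  map_add' c d := by
    funext i; fin_cases i <;> simp <;> ring
  map_smul' s c := by
    funext i; fin_cases i <;> simp [smul_eq_mul] <;> ring

lemma L1_apply (c : M6) : L1 c = ![(q1+q2) * c 2 + (q1*q2+q2^2) * c 5, q1 * c 4, c 0 - q2 * c 4,
    -c 2 + (q1-q2) * c 5, c 1 + c 2 + q2 * c 5, c 3 + c 4] := rfl
lemma L2_apply (c : M6) : L2 c = ![(q1*q2+q2^2) * c 5, c 0 + q2 * c 3, q2 * c 3, c 1 - q2 * c 5,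
    c 2 + 2*q2 * c 5, c 4] := rfl

lemma commL : (L1 * L2 : E6) = L2 * L1 := by
  apply LinearMap.ext; intro c
  funext i; fin_cases i <;>
    simp [Module.End.mul_apply, L1_apply, L2_apply] <;> ring

lemma relm1 : (L1 * L1 + L2 * L2 - L1 * L2 : E6)
    - algebraMap S2 E6 q1 - algebraMap S2 E6 q2 = 0 := by
  apply LinearMap.ext; intro c
  funext i; fin_cases i <;>
    simp [Module.End.mul_apply, L1_apply, L2_apply, Module.algebraMap_end_apply,
      Matrix.vecHead, Matrix.vecTail, Pi.smul_apply, Function.comp, smul_eq_mul] <;> ring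

lemma relm2 : (L1 * (L2 * L2) - L1 * L1 * L2 : E6) + algebraMap S2 E6 q1 * L2
    - algebraMap S2 E6 q2 * L1 = 0 := by
  apply LinearMap.ext; intro c
  funext i; fin_cases i <;>
    simp [Module.End.mul_apply, L1_apply, L2_apply, Module.algebraMap_end_apply,
      Matrix.vecHead, Matrix.vecTail, Pi.smul_apply, Function.comp, smul_eq_mul] <;> ring

/-- `ℂ[b₁,b₂,q₁,q₂] → ℂ[q₁,q₂][x][y]`, `b₁ ↦ x`, `b₂ ↦ y`, `qᵢ ↦ qᵢ`. -/
def toP : R4 →+* Polynomial (Polynomial S2) :=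
  eval₂Hom ((Polynomial.C.comp Polynomial.C).comp MvPolynomial.C)
    ![Polynomial.C Polynomial.X, Polynomial.X,
      Polynomial.C (Polynomial.C (X 0)), Polynomial.C (Polynomial.C (X 1))]

def h1 : Polynomial S2 →+* E6 :=
  Polynomial.eval₂RingHom' (algebraMap S2 E6) L1
    (fun a => Algebra.commute_algebraMap_left a L1)

lemma h1_C (a : S2) : h1 (Polynomial.C a) = algebraMap S2 E6 a := Polynomial.eval₂_C _ _
lemma h1_X : h1 Polynomial.X = L1 := Polynomial.eval₂_X _ _

lemma h1_comm (p : Polynomial S2) : Commute (h1 p) L2 := by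
  induction p using Polynomial.induction_on with
  | C a => rw [h1_C]; exact Algebra.commute_algebraMap_left a L2
  | add p q hp hq => rw [map_add]; exact hp.add_left hq
  | monomial n a ih =>
      rw [pow_succ, ← mul_assoc, map_mul, h1_X]
      exact ih.mul_left commL

def h2 : Polynomial (Polynomial S2) →+* E6 := Polynomial.eval₂RingHom' h1 L2 h1_comm

lemma h2_C (p : Polynomial S2) : h2 (Polynomial.C p) = h1 p := Polynomial.eval₂_C _ _
lemma h2_X : h2 Polynomial.X = L2 := Polynomial.eval₂_X _ _

/-- The representation `ℂ[b₁,b₂,q₁,q₂] → End (ℂ[q₁,q₂]⁶)`. -/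
def Phi : R4 →+* E6 := h2.comp toP

lemma Phi_X0 : Phi (X 0) = L1 := by
  simp [Phi, toP]
  rw [h2_C, h1_X]
lemma Phi_X1 : Phi (X 1) = L2 := by
  simp [Phi, toP]
  exact h2_X
lemma Phi_X2 : Phi (X 2) = algebraMap S2 E6 (X 0) := by
  simp [Phi, toP]
  rw [h2_C, h1_C]
lemma Phi_X3 : Phi (X 3) = algebraMap S2 E6 (X 1) := by
  simp [Phi, toP]
  rw [h2_C, h1_C]
lemma Phi_C (a : ℂ) : Phi (MvPolynomial.C a) = algebraMap S2 E6 (MvPolynomial.C a) := by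
  simp [Phi, toP]
  rw [h2_C, h1_C]

lemma Phi_Rel1 : Phi Rel1 = 0 := by
  unfold Rel1
  rw [map_sub, map_sub, map_sub, map_add, map_pow, map_pow, map_mul,
    Phi_X0, Phi_X1, Phi_X2, Phi_X3, pow_two, pow_two]
  linear_combination (norm := noncomm_ring) relm1

lemma Phi_Rel2 : Phi Rel2 = 0 := by
  unfold Rel2
  rw [map_sub, map_add, map_sub, map_mul, map_mul, map_mul, map_mul, map_pow, map_pow,
    Phi_X0, Phi_X1, Phi_X2, Phi_X3, pow_two, pow_two]
  linear_combination (norm := noncomm_ring) relm2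

/-- The induced representation of `QH3`. -/
def psi0 : QH3 →+* E6 :=
  Ideal.Quotient.lift (Ideal.span {Rel1, Rel2}) Phi (by
    intro a ha
    rw [Ideal.mem_span_pair] at ha
    obtain ⟨u, v, rfl⟩ := ha
    rw [map_add, map_mul, map_mul, Phi_Rel1, Phi_Rel2, mul_zero, mul_zero, add_zero])

lemma psi0_mk (p : R4) : psi0 (mk3 p) = Phi p := rfl

lemma psi0_structMap : psi0.comp structMap = algebraMap S2 E6 := by
  apply MvPolynomial.ringHom_ext
  · intro a
    have h : structMap (MvPolynomial.C a) = mk3 (MvPolynomial.C a) := by simp [structMap]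
    simp only [RingHom.comp_apply, h, psi0_mk, Phi_C]
  · intro i
    fin_cases i
    · show psi0 (structMap (X 0)) = algebraMap S2 E6 (X 0)
      have h : structMap (X 0) = mk3 (X 2) := by simp [structMap]
      rw [h, psi0_mk, Phi_X2]
    · show psi0 (structMap (X 1)) = algebraMap S2 E6 (X 1)
      have h : structMap (X 1) = mk3 (X 3) := by simp [structMap]
      rw [h, psi0_mk, Phi_X3]

lemma smul_def (s : S2) (x : QH3) : s • x = structMap s * x := rfl

/-- The `ℂ[q₁,q₂]`-linear map `QH3 → ℂ[q₁,q₂]⁶` given by acting on the cyclic vector `e₀`. -/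
def psi : QH3 →ₗ[S2] M6 where
  toFun x := psi0 x (Pi.single 0 1)
  map_add' x y := by
    show psi0 (x + y) _ = _
    rw [map_add]; rfl
  map_smul' s x := by
    show psi0 (structMap s * x) _ = _
    rw [map_mul, ← RingHom.comp_apply, psi0_structMap, Module.End.mul_apply,
      Module.algebraMap_end_apply]
    rfl

/-- The `ℂ[q₁,q₂]`-linear map `ℂ[q₁,q₂]⁶ → QH3` sending `eⱼ` to the `j`-th basis monomial. -/
def phi : M6 →ₗ[S2] QH3 where
  toFun c := ∑ j, c j • monBasis j
  map_add' c d := by simp [add_smul, Finset.sum_add_distrib]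
  map_smul' s c := by simp [Finset.smul_sum, mul_smul]

lemma phi_apply (c : M6) : phi c = ∑ j, c j • monBasis j := rfl

lemma mB0 : monBasis 0 = mk3 1 := rfl
lemma mB1 : monBasis 1 = mk3 (X 1) := rfl
lemma mB2 : monBasis 2 = mk3 (X 0) := rfl
lemma mB3 : monBasis 3 = mk3 (X 1 ^ 2) := rfl
lemma mB4 : monBasis 4 = mk3 (X 1 * X 0) := rfl
lemma mB5 : monBasis 5 = mk3 (X 1 ^ 2 * X 0) := rfl

lemma psi0_mb0 : psi0 (monBasis 0) = 1 := by rw [mB0, psi0_mk, map_one]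
lemma psi0_mb1 : psi0 (monBasis 1) = L2 := by rw [mB1, psi0_mk, Phi_X1]
lemma psi0_mb2 : psi0 (monBasis 2) = L1 := by rw [mB2, psi0_mk, Phi_X0]
lemma psi0_mb3 : psi0 (monBasis 3) = L2 * L2 := by
  rw [mB3, psi0_mk, map_pow, Phi_X1, pow_two]
lemma psi0_mb4 : psi0 (monBasis 4) = L2 * L1 := by
  rw [mB4, psi0_mk, map_mul, Phi_X0, Phi_X1]
lemma psi0_mb5 : psi0 (monBasis 5) = L2 * L2 * L1 := by
  rw [mB5, psi0_mk, map_mul, map_pow, Phi_X0, Phi_X1, pow_two]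

lemma L1_e0 : L1 (Pi.single 0 1) = Pi.single 2 1 := by
  funext i; fin_cases i <;> simp [L1_apply, Pi.single_apply]
lemma L2_e0 : L2 (Pi.single 0 1) = Pi.single 1 1 := by
  funext i; fin_cases i <;> simp [L2_apply, Pi.single_apply]
lemma L2_e1 : L2 (Pi.single 1 1) = Pi.single 3 1 := by
  funext i; fin_cases i <;> simp [L2_apply, Pi.single_apply]
lemma L2_e2 : L2 (Pi.single 2 1) = Pi.single 4 1 := by
  funext i; fin_cases i <;> simp [L2_apply, Pi.single_apply]
lemma L2_e4 : L2 (Pi.single 4 1) = Pi.single 5 1 := by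
  funext i; fin_cases i <;> simp [L2_apply, Pi.single_apply]

lemma psi_mon (j : Fin 6) : psi (monBasis j) = Pi.single j 1 := by
  fin_cases j
  · show psi0 (monBasis 0) (Pi.single 0 1) = _
    rw [psi0_mb0]; rfl
  · show psi0 (monBasis 1) (Pi.single 0 1) = _
    rw [psi0_mb1, L2_e0]; rfl
  · show psi0 (monBasis 2) (Pi.single 0 1) = _
    rw [psi0_mb2, L1_e0]; rfl
  · show psi0 (monBasis 3) (Pi.single 0 1) = _
    rw [psi0_mb3, Module.End.mul_apply, L2_e0, L2_e1]; rfl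
  · show psi0 (monBasis 4) (Pi.single 0 1) = _
    rw [psi0_mb4, Module.End.mul_apply, L1_e0, L2_e2]; rfl
  · show psi0 (monBasis 5) (Pi.single 0 1) = _
    rw [psi0_mb5, Module.End.mul_apply, Module.End.mul_apply, L1_e0, L2_e2, L2_e4]; rfl

lemma psi_phi (c : M6) : psi (phi c) = c := by
  have h : psi (phi c) = ∑ j, c j • psi (monBasis j) := by
    rw [phi_apply, map_sum]
    simp only [map_smul]
  rw [h]
  funext i
  simp [psi_mon, Pi.single_apply]

lemma phi_single (j : Fin 6) : phi (Pi.single j 1) = monBasis j := by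
  rw [phi_apply]
  simp [Pi.single_apply, ite_smul]

/-! ### The monomials span `QH3` over `ℂ[q₁,q₂]` -/

lemma mk3_eq {a b : R4} (u v : R4) (h : a - b = u * Rel1 + v * Rel2) : mk3 a = mk3 b :=
  Ideal.Quotient.eq.mpr (Ideal.mem_span_pair.mpr ⟨u, v, h.symm⟩)

lemma smul_q1 (x : QH3) : (X 0 : S2) • x = mk3 (X 2) * x := by
  rw [smul_def]
  congr 1
  simp [structMap]

lemma smul_q2 (x : QH3) : (X 1 : S2) • x = mk3 (X 3) * x := by
  rw [smul_def]
  congr 1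
  simp [structMap]

lemma smul_CC (a : ℂ) (x : QH3) : (MvPolynomial.C a : S2) • x = mk3 (MvPolynomial.C a) * x := by
  rw [smul_def]
  congr 1
  simp [structMap]

lemma span_top : Submodule.span S2 (Set.range monBasis) = ⊤ := by
  set N := Submodule.span S2 (Set.range monBasis) with hN
  have hmem : ∀ j, monBasis j ∈ N := fun j => Submodule.subset_span ⟨j, rfl⟩
  have hmul : ∀ (i : Fin 4) (x : QH3), x ∈ N → mk3 (X i) * x ∈ N := by
    intro i x hx
    induction hx using Submodule.span_induction with
    | mem y hy =>
        obtain ⟨j, rfl⟩ := hy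
        fin_cases i
        · fin_cases j
          · show mk3 (X 0) * monBasis 0 ∈ N
            have h : mk3 (X 0) * monBasis 0 = monBasis 2 := by
              simp only [mB0, mB2, ← map_mul]
              exact mk3_eq 0 0 (by unfold Rel1 Rel2; ring)
            rw [h]; exact hmem 2
          · show mk3 (X 0) * monBasis 1 ∈ N
            have h : mk3 (X 0) * monBasis 1 = monBasis 4 := by
              simp only [mB1, mB4, ← map_mul]
              exact mk3_eq 0 0 (by unfold Rel1 Rel2; ring)
            rw [h]; exact hmem 4
          · show mk3 (X 0) * monBasis 2 ∈ N
            have h : mk3 (X 0) * monBasis 2 = monBasis 4 - monBasis 3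
                + (X 0 : S2) • monBasis 0 + (X 1 : S2) • monBasis 0 := by
              simp only [mB0, mB2, mB3, mB4, smul_q1, smul_q2, ← map_mul, ← map_add, ← map_sub]
              exact mk3_eq 1 0 (by unfold Rel1 Rel2; ring)
            rw [h]
            exact N.add_mem (N.add_mem (N.sub_mem (hmem 4) (hmem 3))
              (N.smul_mem _ (hmem 0))) (N.smul_mem _ (hmem 0))
          · show mk3 (X 0) * monBasis 3 ∈ N
            have h : mk3 (X 0) * monBasis 3 = monBasis 5 := by
              simp only [mB3, mB5, ← map_mul]
              exact mk3_eq 0 0 (by unfold Rel1 Rel2; ring)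
            rw [h]; exact hmem 5
          · show mk3 (X 0) * monBasis 4 ∈ N
            have h : mk3 (X 0) * monBasis 4 = monBasis 5
                + (X 0 : S2) • monBasis 1 - (X 1 : S2) • monBasis 2 := by
              simp only [mB1, mB2, mB4, mB5, smul_q1, smul_q2, ← map_mul, ← map_add, ← map_sub]
              exact mk3_eq 0 (-1) (by unfold Rel1 Rel2; ring)
            rw [h]
            exact N.sub_mem (N.add_mem (hmem 5) (N.smul_mem _ (hmem 1))) (N.smul_mem _ (hmem 2))
          · show mk3 (X 0) * monBasis 5 ∈ N
            have h : mk3 (X 0) * monBasis 5 = (X 1 : S2) • monBasis 4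
                + (X 0 : S2) • monBasis 3 - (X 1 : S2) • monBasis 3
                + (X 0 : S2) • ((X 1 : S2) • monBasis 0)
                + (X 1 : S2) • ((X 1 : S2) • monBasis 0) := by
              simp only [mB0, mB3, mB4, mB5, smul_q1, smul_q2, ← map_mul, ← map_add, ← map_sub]
              exact mk3_eq (X 0 * X 1 + X 3) (X 0 - X 1) (by unfold Rel1 Rel2; ring)
            rw [h]
            exact N.add_mem (N.add_mem (N.sub_mem (N.add_mem (N.smul_mem _ (hmem 4))
              (N.smul_mem _ (hmem 3))) (N.smul_mem _ (hmem 3)))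
              (N.smul_mem _ (N.smul_mem _ (hmem 0)))) (N.smul_mem _ (N.smul_mem _ (hmem 0)))
        · fin_cases j
          · show mk3 (X 1) * monBasis 0 ∈ N
            have h : mk3 (X 1) * monBasis 0 = monBasis 1 := by
              simp only [mB0, mB1, ← map_mul]
              exact mk3_eq 0 0 (by unfold Rel1 Rel2; ring)
            rw [h]; exact hmem 1
          · show mk3 (X 1) * monBasis 1 ∈ N
            have h : mk3 (X 1) * monBasis 1 = monBasis 3 := by
              simp only [mB1, mB3, ← map_mul]
              exact mk3_eq 0 0 (by unfold Rel1 Rel2; ring)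
            rw [h]; exact hmem 3
          · show mk3 (X 1) * monBasis 2 ∈ N
            have h : mk3 (X 1) * monBasis 2 = monBasis 4 := by
              simp only [mB2, mB4, ← map_mul]
            rw [h]; exact hmem 4
          · show mk3 (X 1) * monBasis 3 ∈ N
            have h : mk3 (X 1) * monBasis 3 = (X 1 : S2) • monBasis 2
                + (X 1 : S2) • monBasis 1 := by
              simp only [mB1, mB2, mB3, smul_q2, ← map_mul, ← map_add]
              exact mk3_eq (X 1) 1 (by unfold Rel1 Rel2; ring)
            rw [h]
            exact N.add_mem (N.smul_mem _ (hmem 2)) (N.smul_mem _ (hmem 1))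
          · show mk3 (X 1) * monBasis 4 ∈ N
            have h : mk3 (X 1) * monBasis 4 = monBasis 5 := by
              simp only [mB4, mB5, ← map_mul]
              exact mk3_eq 0 0 (by unfold Rel1 Rel2; ring)
            rw [h]; exact hmem 5
          · show mk3 (X 1) * monBasis 5 ∈ N
            have h : mk3 (X 1) * monBasis 5 = (X 1 : S2) • monBasis 4
                + (X 1 : S2) • monBasis 4 - (X 1 : S2) • monBasis 3
                + (X 0 : S2) • ((X 1 : S2) • monBasis 0)
                + (X 1 : S2) • ((X 1 : S2) • monBasis 0) := by
              simp only [mB0, mB3, mB4, mB5, smul_q1, smul_q2, ← map_mul, ← map_add, ← map_sub]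
              exact mk3_eq (X 0 * X 1 + X 3) (X 0) (by unfold Rel1 Rel2; ring)
            rw [h]
            exact N.add_mem (N.add_mem (N.sub_mem (N.add_mem (N.smul_mem _ (hmem 4))
              (N.smul_mem _ (hmem 4))) (N.smul_mem _ (hmem 3)))
              (N.smul_mem _ (N.smul_mem _ (hmem 0)))) (N.smul_mem _ (N.smul_mem _ (hmem 0)))
        · -- i = 2 : multiplication by `q₁`
          show mk3 (X 2) * monBasis j ∈ N
          rw [show mk3 (X 2) * monBasis j = (X 0 : S2) • monBasis j from (smul_q1 _).symm]
          exact N.smul_mem _ (hmem j)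
        · -- i = 3 : multiplication by `q₂`
          show mk3 (X 3) * monBasis j ∈ N
          rw [show mk3 (X 3) * monBasis j = (X 1 : S2) • monBasis j from (smul_q2 _).symm]
          exact N.smul_mem _ (hmem j)
    | zero => rw [mul_zero]; exact N.zero_mem
    | add y z _ _ hy hz => rw [mul_add]; exact N.add_mem hy hz
    | smul s y _ hy =>
        have h : mk3 (X i) * (s • y) = s • (mk3 (X i) * y) := by
          rw [smul_def, smul_def]
          ring
        rw [h]; exact N.smul_mem s hy
  rw [eq_top_iff]
  rintro x -
  obtain ⟨p, rfl⟩ := Ideal.Quotient.mk_surjective x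
  show mk3 p ∈ N
  induction p using MvPolynomial.induction_on with
  | C a =>
      have h : mk3 (MvPolynomial.C a) = (MvPolynomial.C a : S2) • monBasis 0 := by
        rw [smul_CC, mB0, ← map_mul, mul_one]
      rw [h]; exact N.smul_mem _ (hmem 0)
  | add p q hp hq => rw [map_add]; exact N.add_mem hp hq
  | mul_X p i hp => rw [map_mul, mul_comm]; exact hmul i _ hp

lemma phi_surjective : Function.Surjective phi := by
  have hr : Set.range monBasis ⊆ (LinearMap.range phi : Set QH3) := by
    rintro _ ⟨j, rfl⟩
    exact ⟨Pi.single j 1, phi_single j⟩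
  have htop : LinearMap.range phi = ⊤ := by
    rw [← top_le_iff, ← span_top]
    exact Submodule.span_le.mpr hr
  exact LinearMap.range_eq_top.mp htop

lemma phi_psi (x : QH3) : phi (psi x) = x := by
  obtain ⟨c, rfl⟩ := phi_surjective x
  rw [psi_phi]

end QH3Aux

open QH3Aux in
/-- `A = ℂ[b₁, b₂, q₁, q₂]/(𝓡₁, 𝓡₂)` is a free `ℂ[q₁, q₂]`-module of rank `6`, with
basis the classes of the monomials `1, b₂, b₁, b₂², b₂b₁, b₂²b₁`. -/
theorem qh3_free_rank_six : ∃ b : Module.Basis (Fin 6) S2 QH3, ⇑b = monBasis := by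
  let e : M6 ≃ₗ[S2] QH3 :=
    LinearEquiv.ofLinear phi psi (LinearMap.ext phi_psi) (LinearMap.ext psi_phi)
  refine ⟨(Pi.basisFun S2 (Fin 6)).map e, ?_⟩
  funext j
  rw [Module.Basis.map_apply, Pi.basisFun_apply]
  show phi (Pi.single j 1) = monBasis j
  exact phi_single j

end
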